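/- The coefficient matrices of the split-plot and completely randomized designs satisfy the exact identity (W-1)·C_btw + W(M-1)·C_in = (N-1)·C, where N = WM, N₁ = W₋₁M₋₁, N₂ = W₋₁M₊₁, N₃ = W₊₁M₋₁, N₄ = W₊₁M₊₁. -/

import Mathlib

open Matrix
set_option maxHeartbeats 2000000 in

/-- With `W = W₋₁ + W₊₁`, `M = M₋₁ + M₊₁`, `N = WM`,
`N₁ = W₋₁M₋₁`, `N₂ = W₋₁M₊₁`, `N₃ = W₊₁M₋₁`, `N₄ = W₊₁M₊₁`, `r_A = W₊₁/W₋₁`,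
`r_B = M₊₁/M₋₁`, the coefficient matrices of the split-plot and completely randomized
designs satisfy `(W-1)·C_btw + W(M-1)·C_in = (N-1)·C`. -/
theorem coefficient_matrix_identity
    (Wm Wp Mm Mp : ℕ) (hWm : 0 < Wm) (hWp : 0 < Wp) (hMm : 0 < Mm) (hMp : 0 < Mp) :
    let W : ℝ := (Wm : ℝ) + (Wp : ℝ)
    let M : ℝ := (Mm : ℝ) + (Mp : ℝ)
    let N : ℝ := W * M
    let rA : ℝ := (Wp : ℝ) / (Wm : ℝ)
    let rB : ℝ := (Mp : ℝ) / (Mm : ℝ)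
    let C : Matrix (Fin 4) (Fin 4) ℝ :=
      (N * (N - 1))⁻¹ •
        (Matrix.diagonal ![N / ((Wm : ℝ) * (Mm : ℝ)), N / ((Wm : ℝ) * (Mp : ℝ)),
            N / ((Wp : ℝ) * (Mm : ℝ)), N / ((Wp : ℝ) * (Mp : ℝ))]
          - Matrix.of fun _ _ => (1 : ℝ))
    let Cbtw : Matrix (Fin 4) (Fin 4) ℝ :=
      (N * (W - 1))⁻¹ •
        !![rA, rA, -1, -1; rA, rA, -1, -1;
           -1, -1, rA⁻¹, rA⁻¹; -1, -1, rA⁻¹, rA⁻¹]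
    let Cin : Matrix (Fin 4) (Fin 4) ℝ :=
      (N * W * (M - 1))⁻¹ •
        !![(1 + rA) * rB, -(1 + rA), 0, 0;
           -(1 + rA), (1 + rA) * rB⁻¹, 0, 0;
           0, 0, (1 + rA⁻¹) * rB, -(1 + rA⁻¹);
           0, 0, -(1 + rA⁻¹), (1 + rA⁻¹) * rB⁻¹]
    (W - 1) • Cbtw + (W * (M - 1)) • Cin = (N - 1) • C := by
  intro W M N rA rB C Cbtw Cin
  have hWm' : (Wm:ℝ) ≠ 0 := Nat.cast_ne_zero.2 hWm.ne'
  have hWp' : (Wp:ℝ) ≠ 0 := Nat.cast_ne_zero.2 hWp.ne'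
  have hMm' : (Mm:ℝ) ≠ 0 := Nat.cast_ne_zero.2 hMm.ne'
  have hMp' : (Mp:ℝ) ≠ 0 := Nat.cast_ne_zero.2 hMp.ne'
  have h1 : (1:ℝ) ≤ (Wm:ℝ) := by exact_mod_cast hWm
  have h2 : (1:ℝ) ≤ (Wp:ℝ) := by exact_mod_cast hWp
  have h3 : (1:ℝ) ≤ (Mm:ℝ) := by exact_mod_cast hMm
  have h4 : (1:ℝ) ≤ (Mp:ℝ) := by exact_mod_cast hMp
  have hW1 : W - 1 ≠ 0 := ne_of_gt (by simp only [W]; linarith)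
  have hM1 : M - 1 ≠ 0 := ne_of_gt (by simp only [M]; linarith)
  have hN1 : N - 1 ≠ 0 := ne_of_gt (by simp only [N, W, M]; nlinarith)
  have hW : W ≠ 0 := by simp only [W]; positivity
  have hM : M ≠ 0 := by simp only [M]; positivity
  have hN : N ≠ 0 := mul_ne_zero hW hM
  simp only [C, Cbtw, Cin, smul_smul]
  have e1 : (W - 1) * (N * (W - 1))⁻¹ = N⁻¹ := by
    field_simp
  have e2 : W * (M - 1) * (N * W * (M - 1))⁻¹ = N⁻¹ := by
    field_simp
  have e3 : (N - 1) * (N * (N - 1))⁻¹ = N⁻¹ := by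
    field_simp
  rw [e1, e2, e3, ← smul_add]
  congr 1
  ext i j
  fin_cases i <;> fin_cases j <;>
    simp [rA, rB, N, W, M, Matrix.diagonal, Matrix.vecHead, Matrix.vecTail]
  all_goals field_simp
  all_goals ring
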